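/- arXiv:2008.05008 — 2 statements merged into one kernel-verified Lean document; each statement's English description precedes it below -/
import Mathlib

section
/- The restriction of the transition operator Z to the range of Z*Z is an isometric isomorphism onto ℂ^{n_{k'}}, i.e., for all u in ran(Z*Z), ‖Zu‖ = ‖u‖, and Z maps ran(Z*Z) bijectively onto ℂ^{n_{k'}}. -/
open Complex Matrix Finset

theorem aux_ZZH (n n' : ℕ) (hn : 0 < n) (hle : n' ≤ n)
    (Z : Matrix (Fin n') (Fin n) ℂ)
    (hZ : ∀ (b : Fin n') (a : Fin n), Z b a =
      Complex.exp (2 * Real.pi * Complex.I * (b.val : ℂ) * (a.val : ℂ) / (n : ℂ)) /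
        (Real.sqrt n : ℂ)) : Z * Zᴴ = 1 := by
  ext b b'
  have hn0 : (n : ℂ) ≠ 0 := Nat.cast_ne_zero.2 hn.ne'
  have hπ : (2 * (Real.pi : ℂ) * Complex.I) ≠ 0 := by
    simp [Real.pi_ne_zero, Complex.I_ne_zero, Complex.ofReal_ne_zero]
  set ζ : ℂ := Complex.exp (2 * Real.pi * Complex.I * ((b.val : ℂ) - (b'.val : ℂ)) / n) with hζdef
  have hterm : ∀ a : Fin n, Z b a * star (Z b' a) = ζ ^ (a : ℕ) / n := by
    intro a
    rw [hZ, hZ, hζdef, ← Complex.exp_nat_mul]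
    rw [star_div₀, Complex.star_def, ← Complex.exp_conj]
    rw [div_mul_div_comm, ← Complex.exp_add]
    rw [Complex.conj_ofReal]
    rw [← Complex.ofReal_mul, Real.mul_self_sqrt (Nat.cast_nonneg n)]
    have hc : (starRingEnd ℂ) (2 * (Real.pi : ℂ) * Complex.I * (b'.val : ℂ) * (a.val : ℂ) / n)
        = -(2 * (Real.pi : ℂ) * Complex.I * (b'.val : ℂ) * (a.val : ℂ) / n) := by
      simp only [map_div₀, _root_.map_mul, map_ofNat, Complex.conj_I, Complex.conj_ofReal,
        Complex.conj_natCast]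
      ring
    rw [hc]
    congr 1
    field_simp
    ring
  rw [Matrix.mul_apply]
  simp only [Matrix.conjTranspose_apply, hterm]
  rw [← Finset.sum_div]
  by_cases hbb : b = b'
  · subst hbb
    rw [Matrix.one_apply_eq]
    have hζ1 : ζ = 1 := by rw [hζdef]; simp
    rw [hζ1]
    simp only [one_pow, Finset.sum_const, Finset.card_univ, Fintype.card_fin, nsmul_eq_mul,
      mul_one]
    exact div_self hn0
  · rw [Matrix.one_apply_ne hbb]
    set m : ℤ := (b.val : ℤ) - (b'.val : ℤ) with hm
    have hζn : ζ ^ n = 1 := by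
      rw [hζdef, ← Complex.exp_nat_mul]
      have he : (n : ℂ) * (2 * Real.pi * Complex.I * ((b.val : ℂ) - (b'.val : ℂ)) / n)
          = (m : ℂ) * (2 * Real.pi * Complex.I) := by
        rw [hm]
        push_cast
        field_simp
      rw [he, Complex.exp_int_mul_two_pi_mul_I]
    have hζ1 : ζ ≠ 1 := by
      intro hone
      rw [hζdef, Complex.exp_eq_one_iff] at hone
      obtain ⟨k, hk⟩ := hone
      rw [div_eq_iff hn0] at hk
      have hbc : ((b.val : ℂ) - (b'.val : ℂ)) = k * n := by
        apply mul_left_cancel₀ hπ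
        linear_combination hk
      have hbz : m = k * n := by rw [hm]; exact_mod_cast hbc
      have hd : (n : ℤ) ∣ m := ⟨k, by linarith⟩
      have h0 : m = 0 := by
        rw [hm] at hd ⊢
        refine Int.eq_zero_of_abs_lt_dvd hd ?_
        have h1 : (b.val : ℤ) < n := by exact_mod_cast lt_of_lt_of_le b.2 hle
        have h2 : (b'.val : ℤ) < n := by exact_mod_cast lt_of_lt_of_le b'.2 hle
        refine abs_lt.2 ⟨by omega, by omega⟩
      rw [hm] at h0
      exact hbb (Fin.ext (by omega))
    rw [Fin.sum_univ_eq_sum_range (fun i => ζ ^ i) n, geom_sum_eq hζ1, hζn, sub_self, zero_div,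
      zero_div]

theorem transition_isometric_iso_on_range (n n' : ℕ) (hn : 0 < n) (hn' : 0 < n') (hle : n' ≤ n)
    (Z : Matrix (Fin n') (Fin n) ℂ)
    (hZ : ∀ (b : Fin n') (a : Fin n), Z b a =
      Complex.exp (2 * Real.pi * Complex.I * (b.val : ℂ) * (a.val : ℂ) / (n : ℂ)) /
        (Real.sqrt n : ℂ)) :
    (∀ u ∈ LinearMap.range (Matrix.toEuclideanLin (Zᴴ * Z)),
        ‖Matrix.toEuclideanLin Z u‖ = ‖u‖) ∧
    Set.BijOn (Matrix.toEuclideanLin Z)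
      (LinearMap.range (Matrix.toEuclideanLin (Zᴴ * Z)) : Set (EuclideanSpace ℂ (Fin n)))
      (Set.univ : Set (EuclideanSpace ℂ (Fin n'))) := by
  have hZZ : Z * Zᴴ = 1 := aux_ZZH n n' hn hle Z hZ
  -- composition facts
  have hcomp : ∀ w : EuclideanSpace ℂ (Fin n'),
      Matrix.toEuclideanLin Z (Matrix.toEuclideanLin Zᴴ w) = w := by
    intro w
    simp [Matrix.toEuclideanLin_apply, Matrix.mulVec_mulVec, hZZ]
  have hfix : ∀ u ∈ LinearMap.range (Matrix.toEuclideanLin (Zᴴ * Z)),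
      Matrix.toEuclideanLin Zᴴ (Matrix.toEuclideanLin Z u) = u := by
    rintro u ⟨v, rfl⟩
    have h2 : Zᴴ * (Z * (Zᴴ * Z)) = Zᴴ * Z := by
      rw [← Matrix.mul_assoc Z, hZZ, Matrix.one_mul]
    simp [Matrix.toEuclideanLin_apply, Matrix.mulVec_mulVec, ← Matrix.mul_assoc, h2,
      Matrix.mul_assoc]
  have hnorm : ∀ u ∈ LinearMap.range (Matrix.toEuclideanLin (Zᴴ * Z)),
      ‖Matrix.toEuclideanLin Z u‖ = ‖u‖ := by
    intro u hu
    have h1 : inner (𝕜 := ℂ) (Matrix.toEuclideanLin Z u) (Matrix.toEuclideanLin Z u)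
        = inner (𝕜 := ℂ) u u := by
      conv_rhs => rw [← hfix u hu]
      rw [Matrix.toEuclideanLin_conjTranspose_eq_adjoint, LinearMap.adjoint_inner_left,
        ← Matrix.toEuclideanLin_conjTranspose_eq_adjoint, hfix u hu]
    rw [@norm_eq_sqrt_re_inner ℂ, @norm_eq_sqrt_re_inner ℂ, h1]
  refine ⟨hnorm, ⟨fun u _ => trivial, fun u1 h1 u2 h2 heq => ?_, fun w _ => ?_⟩⟩
  · have hmem : u1 - u2 ∈ LinearMap.range (Matrix.toEuclideanLin (Zᴴ * Z)) :=
      Submodule.sub_mem _ h1 h2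
    have h0 : Matrix.toEuclideanLin Z (u1 - u2) = 0 := by
      rw [map_sub, heq, sub_self]
    have := hnorm _ hmem
    rw [h0, norm_zero] at this
    exact sub_eq_zero.mp (norm_eq_zero.mp this.symm)
  · refine ⟨Matrix.toEuclideanLin Zᴴ w, ⟨Matrix.toEuclideanLin Zᴴ w, ?_⟩, hcomp w⟩
    have h2 : Zᴴ * Z * Zᴴ = Zᴴ := by
      rw [Matrix.mul_assoc, hZZ, Matrix.mul_one]
    simp [Matrix.toEuclideanLin_apply, Matrix.mulVec_mulVec, h2, hZZ]
end

section
/- Let Z be the transport operator on H = ⊕_{k=1}^N ℂ^{n_k} (with n_{k+1} ≤ n_k) and φ_{0_k} the zeroth entangled vector of level k. For the zeroth canonical basis vector |0_k⟩ of level k and for 1 ≤ m ≤ (N-k)/2, one has Z^{2m}|0_k⟩ = ∏_{j=0}^{m-1} √(n_{k+2j+1}/n_{k+2j}) · |0_{k+2m}⟩ and Z^{2m-1}|0_k⟩ = ∏_{j=0}^{m-1} √(n_{k+2j+1}/n_{k+2j}) · φ_{0_{k+2m-1}}. -/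
open Complex Matrix Finset

lemma aux_sum_exp (nn b : ℕ) (hn : 0 < nn) (hb : b < nn) :
    ∑ a : Fin nn, Complex.exp (2 * (Real.pi : ℂ) * Complex.I * (b : ℂ) * (a : ℂ) / (nn : ℂ)) =
      if b = 0 then (nn : ℂ) else 0 := by
  have hω : ∀ a : Fin nn,
      Complex.exp (2 * (Real.pi : ℂ) * Complex.I * (b : ℂ) * (a : ℂ) / (nn : ℂ)) =
        (Complex.exp (2 * (Real.pi : ℂ) * Complex.I * (b : ℂ) / (nn : ℂ))) ^ (a : ℕ) := by
    intro a
    rw [← Complex.exp_nat_mul]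
    congr 1
    ring
  simp only [hω]
  rw [Fin.sum_univ_eq_sum_range
    (fun i => (Complex.exp (2 * (Real.pi : ℂ) * Complex.I * (b : ℂ) / (nn : ℂ))) ^ i)]
  by_cases hb0 : b = 0
  · subst hb0
    simp
  · have hprim := Complex.isPrimitiveRoot_exp nn hn.ne'
    have hpow : Complex.exp (2 * (Real.pi : ℂ) * Complex.I * (b : ℂ) / (nn : ℂ)) =
        (Complex.exp (2 * (Real.pi : ℂ) * Complex.I / (nn : ℂ))) ^ b := by
      rw [← Complex.exp_nat_mul]
      congr 1
      ring
    have hne : Complex.exp (2 * (Real.pi : ℂ) * Complex.I * (b : ℂ) / (nn : ℂ)) ≠ 1 := by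
      rw [hpow]
      intro h
      have := (hprim.pow_eq_one_iff_dvd b).mp h
      have := Nat.le_of_dvd (Nat.pos_of_ne_zero hb0) this
      omega
    have hone : (Complex.exp (2 * (Real.pi : ℂ) * Complex.I * (b : ℂ) / (nn : ℂ))) ^ nn = 1 := by
      rw [hpow, ← pow_mul, mul_comm b nn, pow_mul, hprim.pow_eq_one, one_pow]
    rw [geom_sum_eq hne, hone, sub_self, zero_div, if_neg hb0]

theorem transport_powers_on_zero (N : ℕ) (n : ℕ → ℕ) (hpos : ∀ k, 0 < n k)
    (hmono : ∀ k, k + 1 < N → n (k + 1) ≤ n k)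
    (Z : Matrix (Σ k : Fin N, Fin (n k.val)) (Σ k : Fin N, Fin (n k.val)) ℂ)
    (hZ : ∀ (k' k : Fin N) (b : Fin (n k'.val)) (a : Fin (n k.val)),
      Z ⟨k', b⟩ ⟨k, a⟩ =
        if k'.val = k.val + 1 then
          Complex.exp (2 * Real.pi * Complex.I * (b.val : ℂ) * (a.val : ℂ) / (n k.val : ℂ)) /
            (Real.sqrt (n k.val) : ℂ)
        else 0)
    (k m : ℕ) (hm : 1 ≤ m) (hkm : k + 2 * m < N) :
    (Z ^ (2 * m)).mulVec
        (Pi.single (⟨⟨k, by omega⟩, ⟨0, hpos k⟩⟩ : Σ k : Fin N, Fin (n k.val)) 1) =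
      ((∏ j ∈ Finset.range m,
          Real.sqrt ((n (k + 2 * j + 1) : ℝ) / (n (k + 2 * j) : ℝ)) : ℝ) : ℂ) •
        (Pi.single (⟨⟨k + 2 * m, hkm⟩, ⟨0, hpos (k + 2 * m)⟩⟩ : Σ k : Fin N, Fin (n k.val)) 1 :
          (Σ k : Fin N, Fin (n k.val)) → ℂ) ∧
    (Z ^ (2 * m - 1)).mulVec
        (Pi.single (⟨⟨k, by omega⟩, ⟨0, hpos k⟩⟩ : Σ k : Fin N, Fin (n k.val)) 1) =
      ((∏ j ∈ Finset.range m,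
          Real.sqrt ((n (k + 2 * j + 1) : ℝ) / (n (k + 2 * j) : ℝ)) : ℝ) : ℂ) •
        (fun i : Σ k : Fin N, Fin (n k.val) =>
          if i.1.val = k + 2 * m - 1 then 1 / (Real.sqrt (n (k + 2 * m - 1)) : ℂ) else 0) := by
  -- notation
  have hk : k < N := by omega
  -- canonical basis vector at level k', entry 0
  let sing : ∀ (k' : ℕ), k' < N → ((Σ k : Fin N, Fin (n k.val)) → ℂ) :=
    fun k' h => Pi.single (⟨⟨k', h⟩, ⟨0, hpos k'⟩⟩ : Σ k : Fin N, Fin (n k.val)) 1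
  -- entangled vector at level k'
  let phi : ℕ → ((Σ k : Fin N, Fin (n k.val)) → ℂ) :=
    fun k' i => if i.1.val = k' then 1 / (Real.sqrt (n k') : ℂ) else 0
  -- step A : Z on basis vector
  have stepA : ∀ (k' : ℕ) (h0 : k' < N) (h1 : k' + 1 < N),
      Z.mulVec (sing k' h0) =
        ((Real.sqrt ((n (k' + 1) : ℝ) / (n k' : ℝ)) : ℝ) : ℂ) • phi (k' + 1) := by
    intro k' h0 h1
    have harith : ((Real.sqrt ((n (k' + 1) : ℝ) / (n k' : ℝ)) : ℝ) : ℂ) *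
        (1 / (Real.sqrt (n (k' + 1)) : ℂ)) = 1 / (Real.sqrt (n k') : ℂ) := by
      have hr : Real.sqrt ((n (k' + 1) : ℝ) / (n k' : ℝ)) * (1 / Real.sqrt (n (k' + 1))) =
          1 / Real.sqrt (n k') := by
        rw [Real.sqrt_div' _ (le_of_lt (by exact_mod_cast hpos k' : (0 : ℝ) < n k'))]
        have h2 : Real.sqrt (n (k' + 1)) ≠ 0 :=
          ne_of_gt (Real.sqrt_pos.mpr (by exact_mod_cast hpos (k' + 1)))
        have h3 : Real.sqrt (n k') ≠ 0 :=
          ne_of_gt (Real.sqrt_pos.mpr (by exact_mod_cast hpos k'))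
        field_simp
      calc ((Real.sqrt ((n (k' + 1) : ℝ) / (n k' : ℝ)) : ℝ) : ℂ) *
            (1 / (Real.sqrt (n (k' + 1)) : ℂ))
          = ((Real.sqrt ((n (k' + 1) : ℝ) / (n k' : ℝ)) * (1 / Real.sqrt (n (k' + 1))) : ℝ) : ℂ) := by
            push_cast; ring
        _ = ((1 / Real.sqrt (n k') : ℝ) : ℂ) := by rw [hr]
        _ = 1 / (Real.sqrt (n k') : ℂ) := by push_cast; ring
    rw [Matrix.mulVec_single]
    funext i
    obtain ⟨l, b⟩ := i
    show Z ⟨l, b⟩ _ * 1 = _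
    rw [hZ]
    simp only [phi, Pi.smul_apply, smul_eq_mul]
    by_cases hl : l.val = k' + 1
    · rw [if_pos hl, if_pos hl]
      simp only [Fin.val_mk, Nat.cast_zero, mul_zero, zero_div, Complex.exp_zero]
      rw [← harith]
      ring
    · rw [if_neg hl, if_neg hl, zero_mul, mul_zero]
  -- step B : Z on entangled vector
  have stepB : ∀ (k' : ℕ) (h1 : k' + 1 < N),
      Z.mulVec (phi k') = sing (k' + 1) h1 := by
    intro k' h1
    have hk' : k' < N := by omega
    have hle : n (k' + 1) ≤ n k' := hmono k' h1
    funext i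
    obtain ⟨l, b⟩ := i
    show ∑ j : (Σ k : Fin N, Fin (n k.val)), Z ⟨l, b⟩ j * phi k' j = _
    rw [← Finset.univ_sigma_univ, Finset.sum_sigma]
    rw [Finset.sum_eq_single (⟨k', hk'⟩ : Fin N)]
    · simp only [phi]
      by_cases hl : l.val = k' + 1
      · have hsum : ∀ a : Fin (n k'),
            Z ⟨l, b⟩ ⟨⟨k', hk'⟩, a⟩ =
            Complex.exp (2 * Real.pi * Complex.I * (b.val : ℂ) * (a.val : ℂ) / (n k' : ℂ)) /
              (Real.sqrt (n k') : ℂ) := by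
          intro a
          rw [hZ]
          simp [hl]
        simp only [hsum, if_true]
        rw [← Finset.sum_mul, ← Finset.sum_div]
        have hb : b.val < n k' := lt_of_lt_of_le (by rw [← hl]; exact b.isLt) hle
        rw [aux_sum_exp (n k') b.val (hpos k') hb]
        have hsq : ((Real.sqrt (n k') : ℝ) : ℂ) * ((Real.sqrt (n k') : ℝ) : ℂ) = (n k' : ℂ) := by
          rw [← Complex.ofReal_mul, Real.mul_self_sqrt (by positivity)]
          push_cast; ring
        have hl' : l = ⟨k' + 1, h1⟩ := Fin.ext hl
        subst hl'
        simp only [sing]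
        rw [Pi.single_apply]
        by_cases hb0 : b.val = 0
        · have hb0' : b = ⟨0, hpos (k' + 1)⟩ := by
            apply Fin.ext; exact hb0
          rw [if_pos hb0, if_pos (by rw [hb0'])]
          have hnn : (n k' : ℂ) ≠ 0 := by exact_mod_cast (hpos k').ne'
          field_simp [hsq]
          rw [sq, hsq, div_self hnn]
        · rw [if_neg hb0, if_neg (by
            intro hcon
            apply hb0
            have := congrArg (fun x : (Σ k : Fin N, Fin (n k.val)) => x.2.val) hcon
            simpa using this)]
          simp
      · have hz : ∀ a : Fin (n k'),
            Z ⟨l, b⟩ ⟨⟨k', hk'⟩, a⟩ = 0 := by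
          intro a
          rw [hZ, if_neg hl]
        simp only [hz, zero_mul, Finset.sum_const_zero]
        simp only [sing]
        rw [Pi.single_apply, if_neg (by
          intro hcon
          apply hl
          have := congrArg (fun x : (Σ k : Fin N, Fin (n k.val)) => x.1.val) hcon
          simpa using this)]
    · intro x _ hx
      have hxv : ¬ (x.val = k') := fun hh => hx (Fin.ext hh)
      simp only [phi, hxv, if_false, mul_zero, Finset.sum_const_zero]
    · intro h
      exact absurd (Finset.mem_univ _) h
  -- the ambient product constants
  set C : ℕ → ℂ := fun m' =>
    ((∏ j ∈ Finset.range m',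
        Real.sqrt ((n (k + 2 * j + 1) : ℝ) / (n (k + 2 * j) : ℝ)) : ℝ) : ℂ) with hC
  have hCsucc : ∀ m', C (m' + 1) =
      C m' * ((Real.sqrt ((n (k + 2 * m' + 1) : ℝ) / (n (k + 2 * m') : ℝ)) : ℝ) : ℂ) := by
    intro m'
    simp only [hC, Finset.prod_range_succ, Complex.ofReal_mul]
  have singeq : ∀ (a b : ℕ) (ha : a < N) (hb : b < N), a = b → sing a ha = sing b hb := by
    intro a b ha hb h
    subst h
    rfl
  -- main induction
  have main : ∀ m', 1 ≤ m' → ∀ (h : k + 2 * m' < N),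
      (Z ^ (2 * m' - 1)).mulVec (sing k hk) = C m' • phi (k + 2 * m' - 1) ∧
      (Z ^ (2 * m')).mulVec (sing k hk) = C m' • sing (k + 2 * m') h := by
    intro m'
    induction m' with
    | zero => omega
    | succ mm ih =>
      intro _ h
      by_cases hmm : mm = 0
      · subst hmm
        constructor
        · have e1 : 2 * (0 + 1) - 1 = 1 := by norm_num
          rw [e1, pow_one]
          have e2 : k + 2 * (0 + 1) - 1 = k + 1 := by omega
          rw [e2]
          have := stepA k hk (by omega)
          rw [this]
          congr 1
          simp [hC]
        · have e1 : 2 * (0 + 1) = 2 := by norm_num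
          conv_lhs => rw [e1]
          have hsA := stepA k hk (by omega)
          have hsB := stepB (k + 1) (by omega)
          rw [pow_two, ← Matrix.mulVec_mulVec, hsA, Matrix.mulVec_smul, hsB]
          rw [singeq (k + 1 + 1) (k + 2 * (0 + 1)) (by omega) h (by omega)]
          congr 1
          simp [hC]
      · have hmm1 : 1 ≤ mm := Nat.pos_of_ne_zero hmm
        have hmN : k + 2 * mm < N := by omega
        obtain ⟨ih1, ih2⟩ := ih hmm1 hmN
        have hsA := stepA (k + 2 * mm) (by omega) (by omega)
        have hsB := stepB (k + 2 * mm + 1) (by omega)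
        have podd : (Z ^ (2 * (mm + 1) - 1)).mulVec (sing k hk) =
            C (mm + 1) • phi (k + 2 * (mm + 1) - 1) := by
          have e1 : 2 * (mm + 1) - 1 = 2 * mm + 1 := by omega
          conv_lhs => rw [e1, pow_succ']
          rw [← Matrix.mulVec_mulVec, ih2, Matrix.mulVec_smul, hsA, hCsucc]
          rw [smul_smul]
          have e2 : k + 2 * (mm + 1) - 1 = k + 2 * mm + 1 := by omega
          rw [e2]
        refine ⟨podd, ?_⟩
        have e1 : 2 * (mm + 1) = (2 * (mm + 1) - 1) + 1 := by omega
        conv_lhs => rw [e1, pow_succ']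
        rw [← Matrix.mulVec_mulVec, podd, Matrix.mulVec_smul]
        have e2 : k + 2 * (mm + 1) - 1 = k + 2 * mm + 1 := by omega
        rw [e2, hsB]
        rw [singeq (k + 2 * mm + 1 + 1) (k + 2 * (mm + 1)) (by omega) h (by omega)]
  obtain ⟨h1, h2⟩ := main m hm hkm
  exact ⟨h2, h1⟩
end
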